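/- Let m = (x,y) ⊆ ℂ[x,y], ε > 0, and a_n = m^{⌊εn⌋}(x^n, y). If C, D are constants such that m^{⌊ε(Cn+D)⌋} ⊆ a_n for all sufficiently large n, then C ≥ 1 + 1/ε. -/

import Mathlib

open MvPolynomial

/-- If `x^k ∈ (x,y)^j * (x^n, y)` then `j + n ≤ k`. -/
lemma aux_pow_mem_imp (j n k : ℕ)
    (h : (X 0 : MvPolynomial (Fin 2) ℂ) ^ k ∈
      (Ideal.span {X 0, X 1}) ^ j *
        Ideal.span {(X 0 : MvPolynomial (Fin 2) ℂ) ^ n, X 1}) : j + n ≤ k := by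
  classical
  set φ : MvPolynomial (Fin 2) ℂ →+* Polynomial ℂ :=
    (aeval ![Polynomial.X, 0] : MvPolynomial (Fin 2) ℂ →ₐ[ℂ] Polynomial ℂ).toRingHom with hφ
  have hφ0 : φ (X 0) = Polynomial.X := by simp [hφ]
  have hφ1 : φ (X 1) = 0 := by simp [hφ]
  have hmem := Ideal.mem_map_of_mem φ h
  rw [Ideal.map_mul, Ideal.map_pow, Ideal.map_span, Ideal.map_span] at hmem
  have himg1 : φ '' {X 0, X 1} = {Polynomial.X, 0} := by
    simp [Set.image_insert_eq, hφ0, hφ1]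
  have himg2 : φ '' {(X 0 : MvPolynomial (Fin 2) ℂ) ^ n, X 1} = {Polynomial.X ^ n, 0} := by
    simp [Set.image_insert_eq, hφ0, hφ1, map_pow]
  rw [himg1, himg2] at hmem
  have hspan1 : (Ideal.span {Polynomial.X, 0} : Ideal (Polynomial ℂ)) =
      Ideal.span {Polynomial.X} := by
    simp [Set.pair_comm Polynomial.X 0, Ideal.span_insert, Submodule.span_zero_singleton]
  have hspan2 : (Ideal.span {Polynomial.X ^ n, 0} : Ideal (Polynomial ℂ)) =
      Ideal.span {Polynomial.X ^ n} := by
    simp [Set.pair_comm (Polynomial.X ^ n) 0, Ideal.span_insert, Submodule.span_zero_singleton]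
  rw [hspan1, hspan2, Ideal.span_singleton_pow, Ideal.span_singleton_mul_span_singleton,
    ← pow_add, Ideal.mem_span_singleton] at hmem
  have hφk : φ ((X 0 : MvPolynomial (Fin 2) ℂ) ^ k) = Polynomial.X ^ k := by
    rw [map_pow, hφ0]
  rw [hφk] at hmem
  have := Polynomial.natDegree_le_of_dvd hmem (pow_ne_zero _ Polynomial.X_ne_zero)
  simpa using this

theorem epsilon_graded_system_constant_bound
    (ε : ℚ) (hε : 0 < ε)
    (m : Ideal (MvPolynomial (Fin 2) ℂ))
    (hm : m = Ideal.span {X 0, X 1})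
    (a : ℕ → Ideal (MvPolynomial (Fin 2) ℂ))
    (ha : ∀ n : ℕ, a n = m ^ (⌊ε * n⌋₊) * Ideal.span {(X 0 : MvPolynomial (Fin 2) ℂ) ^ n, X 1})
    (C D : ℚ)
    (hcontain : ∃ N : ℕ, ∀ n ≥ N, m ^ (⌊ε * (C * n + D)⌋₊) ≤ a n) :
    C ≥ 1 + 1 / ε := by
  obtain ⟨N, hN⟩ := hcontain
  -- for all n ≥ N, ⌊ε(Cn+D)⌋₊ ≥ ⌊εn⌋₊ + n
  have key : ∀ n ≥ N, ⌊ε * n⌋₊ + n ≤ ⌊ε * (C * n + D)⌋₊ := by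
    intro n hn
    have hx : (X 0 : MvPolynomial (Fin 2) ℂ) ^ (⌊ε * (C * n + D)⌋₊) ∈
        m ^ (⌊ε * (C * n + D)⌋₊) := by
      apply Ideal.pow_mem_pow
      rw [hm]
      exact Ideal.subset_span (by simp)
    have hx2 := hN n hn hx
    rw [ha n, hm] at hx2
    have := aux_pow_mem_imp (⌊ε * n⌋₊) n (⌊ε * (C * n + D)⌋₊) hx2
    omega
  by_contra hlt
  push_neg at hlt
  have hδ : 0 < 1 + ε - ε * C := by
    have : ε * C < ε * (1 + 1 / ε) := by
      exact (mul_lt_mul_iff_right₀ hε).mpr hlt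
    rw [mul_add, mul_one_div, div_self hε.ne'] at this
    linarith
  set δ := 1 + ε - ε * C with hδdef
  -- pick n large
  set n : ℕ := max N (⌈(1 + ε * D) / δ⌉₊ + 1) with hndef
  have hnN : n ≥ N := le_max_left _ _
  have hkey := key n hnN
  have hn1 : 1 ≤ n := by
    have := le_max_right N (⌈(1 + ε * D) / δ⌉₊ + 1)
    omega
  -- from key: ε(Cn+D) ≥ ⌊ε(Cn+D)⌋₊ ≥ ⌊εn⌋₊ + n > εn - 1 + n
  have hpos : (0:ℚ) ≤ ε * (C * n + D) := by
    by_contra hneg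
    push_neg at hneg
    have : ⌊ε * (C * n + D)⌋₊ = 0 := Nat.floor_of_nonpos hneg.le
    omega
  have h1 : (⌊ε * (C * n + D)⌋₊ : ℚ) ≤ ε * (C * n + D) := Nat.floor_le hpos
  have h2 : ε * n - 1 < (⌊ε * n⌋₊ : ℚ) := by
    have := Nat.lt_floor_add_one (ε * n)
    linarith [Nat.sub_one_lt_floor (ε * n)]
  have h3 : ((⌊ε * n⌋₊ + n : ℕ) : ℚ) ≤ (⌊ε * (C * n + D)⌋₊ : ℚ) := by
    exact_mod_cast hkey
  push_cast at h3
  -- so ε n - 1 + n < ε (C n + D), i.e. δ n < 1 + ε D... rearrange: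
  have hmain : δ * n < 1 + ε * D := by
    have : ε * n - 1 + n < ε * (C * n + D) := by linarith
    rw [hδdef]
    ring_nf
    ring_nf at this
    linarith
  -- but n ≥ ⌈(1-εD)/δ⌉₊ + 1 > (1-εD)/δ
  have hnbig : ((1 + ε * D) / δ : ℚ) < n := by
    have h4 : (⌈(1 + ε * D) / δ⌉₊ + 1 : ℕ) ≤ n := le_max_right _ _
    have h5 : ((1 + ε * D) / δ : ℚ) ≤ (⌈(1 + ε * D) / δ⌉₊ : ℚ) := Nat.le_ceil _
    have h6 : ((⌈(1 + ε * D) / δ⌉₊ + 1 : ℕ) : ℚ) ≤ (n : ℚ) := by exact_mod_cast h4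
    push_cast at h6
    linarith
  have : 1 + ε * D < δ * n := by
    rw [div_lt_iff₀ hδ] at hnbig
    linarith [hnbig]
  linarith
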